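/- There exist a unital complex Banach algebra A and elements a, b ∈ A such that ϱ(a,b) ≠ ϱ(b,a); in particular, ϱ is not symmetric. Concretely, in the unital algebra generated by idempotents x_1, x_2 with x_1 x_2 = 0 and x_2 x_1 ≠ 0 (realizable as a four-dimensional subalgebra of the 3×3 complex matrices), the elements a = x_1/2 and b = -x_2/2 satisfy ϱ(a,b) = 1/2 and ϱ(b,a) = 1. -/

import Mathlib

open Filter in
noncomputable def varrho {A : Type*} [NormedRing A] (a b : A) : ℝ :=
  atTop.limsup fun n : ℕ => ‖(fun x => a * x - x * b)^[n] 1‖ ^ ((n : ℝ)⁻¹)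

/-- The properties asked for: idempotents `x₁, x₂` with `x₁x₂ = 0 ≠ x₂x₁`, and
`a = x₁/2`, `b = -x₂/2` (expressed as `a + a = x₁`, `b + b = -x₂`) with
`ϱ(a,b) = 1/2 ≠ 1 = ϱ(b,a)`. -/
def RhoAsymWitness (A : Type) [NormedRing A] : Prop :=
  ∃ x₁ x₂ a b : A,
    x₁ * x₁ = x₁ ∧ x₂ * x₂ = x₂ ∧ x₁ * x₂ = 0 ∧ x₂ * x₁ ≠ 0 ∧
    a + a = x₁ ∧ b + b = -x₂ ∧
    varrho a b = 1 / 2 ∧ varrho b a = 1 ∧ varrho a b ≠ varrho b a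

section RhoAux
open Matrix Filter Topology

attribute [local instance] Matrix.linftyOpNormedRing Matrix.linftyOpNormedAlgebra
  Matrix.linftyOpNormedSpace

/-- The concrete algebra: `2 × 2` complex matrices with the `L^∞`-operator norm. -/
abbrev A2 : Type := Matrix (Fin 2) (Fin 2) ℂ

noncomputable def aa : A2 := !![1/2, 0; 0, 0]
noncomputable def bb : A2 := !![0, 0; -(1/2), -(1/2)]

lemma norm_fin_two (a b c d : ℂ) : ‖(!![a,b;c,d] : A2)‖ = max (‖a‖+‖b‖) (‖c‖+‖d‖) := by
  rw [Matrix.linfty_opNorm_def]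
  rw [show (Finset.univ : Finset (Fin 2)) = {0, 1} by decide, Finset.sup_insert,
    Finset.sup_singleton]
  simp [Fin.sum_univ_two]

lemma iterab (n : ℕ) (hn : 1 ≤ n) :
    (fun x : A2 => aa * x - x * bb)^[n] 1 = ((2:ℂ)^n)⁻¹ • !![1,0;1,1] := by
  induction n, hn using Nat.le_induction with
  | base =>
    simp only [Function.iterate_one, mul_one, one_mul, pow_one]
    ext i j
    fin_cases i <;> fin_cases j <;> simp [aa, bb]
  | succ n hn ih =>
    rw [Function.iterate_succ_apply', ih]
    have key : aa * !![(1:ℂ),0;1,1] - !![(1:ℂ),0;1,1] * bb = (2:ℂ)⁻¹ • !![1,0;1,1] := by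
      ext i j
      fin_cases i <;> fin_cases j <;> simp [aa, bb, Matrix.mul_fin_two]
    rw [Matrix.mul_smul, Matrix.smul_mul, ← smul_sub, key, smul_smul, pow_succ, mul_inv]

lemma iterba (n : ℕ) (hn : 1 ≤ n) :
    (fun x : A2 => bb * x - x * aa)^[n] 1 = ((-2:ℂ)^n)⁻¹ • !![1,0; 2^n - 1, 1] := by
  induction n, hn using Nat.le_induction with
  | base =>
    simp only [Function.iterate_one, mul_one, one_mul, pow_one]
    ext i j
    fin_cases i <;> fin_cases j <;> simp [aa, bb] <;> norm_num
  | succ n hn ih =>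
    rw [Function.iterate_succ_apply', ih]
    have key : bb * !![(1:ℂ),0;2^n-1,1] - !![(1:ℂ),0;2^n-1,1] * aa
        = (-2:ℂ)⁻¹ • !![1,0;2^(n+1)-1,1] := by
      ext i j
      fin_cases i <;> fin_cases j <;>
        simp [aa, bb, Matrix.mul_fin_two, pow_succ] <;> ring
    rw [Matrix.mul_smul, Matrix.smul_mul, ← smul_sub, key, smul_smul]
    congr 1
    rw [pow_succ, mul_inv]

lemma normab (n : ℕ) : ‖(((2:ℂ)^n)⁻¹ • !![1,0;1,1] : A2)‖ = 2 * ((2:ℝ)^n)⁻¹ := by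
  rw [norm_smul, norm_fin_two]
  norm_num
  ring

lemma normba (n : ℕ) : ‖(((-2:ℂ)^n)⁻¹ • !![1,0;2^n-1,1] : A2)‖ = 1 := by
  rw [norm_smul, norm_fin_two]
  have h1 : ‖((2:ℂ)^n - 1)‖ = 2^n - 1 := by
    rw [show ((2:ℂ)^n - 1) = (((2^n - 1 : ℝ)) : ℂ) by push_cast; ring, Complex.norm_real,
      Real.norm_of_nonneg (sub_nonneg.mpr (one_le_pow₀ one_le_two))]
  rw [h1]
  have h2 : ‖((-2:ℂ)^n)⁻¹‖ = ((2:ℝ)^n)⁻¹ := by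
    rw [norm_inv, norm_pow]
    norm_num
  rw [h2]
  norm_num
  rw [max_eq_right (one_le_pow₀ one_le_two)]
  exact inv_mul_cancel₀ (by positivity)

lemma varrho_ab : varrho aa bb = 1 / 2 := by
  have hexp : Tendsto (fun n : ℕ => (n:ℝ)⁻¹ - 1) atTop (𝓝 (-1)) := by
    have := (tendsto_inv_atTop_nhds_zero_nat (𝕜 := ℝ)).sub_const 1
    simpa using this
  have hcont : ContinuousAt (fun x : ℝ => (2:ℝ) ^ x) (-1) :=
    Real.continuousAt_const_rpow two_ne_zero
  have h2 : Tendsto (fun n : ℕ => (2:ℝ) ^ ((n:ℝ)⁻¹ - 1)) atTop (𝓝 ((2:ℝ) ^ (-1:ℝ))) :=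
    hcont.tendsto.comp hexp
  rw [show ((2:ℝ) ^ (-1:ℝ)) = 1/2 by rw [Real.rpow_neg_one]; norm_num] at h2
  have heq : (fun n : ℕ => ‖(fun x : A2 => aa * x - x * bb)^[n] 1‖ ^ ((n : ℝ)⁻¹))
      =ᶠ[atTop] fun n : ℕ => (2:ℝ) ^ ((n:ℝ)⁻¹ - 1) := by
    filter_upwards [eventually_ge_atTop 1] with n hn
    rw [iterab n hn, normab n]
    have hne : (n:ℝ) ≠ 0 := Nat.cast_ne_zero.mpr (by omega)
    rw [show (2:ℝ) * ((2:ℝ)^n)⁻¹ = (2:ℝ) ^ ((1:ℝ) - n) by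
      rw [Real.rpow_sub two_pos, Real.rpow_one, Real.rpow_natCast]; ring]
    rw [← Real.rpow_mul (le_of_lt two_pos)]
    congr 1
    field_simp
  exact (h2.congr' heq.symm).limsup_eq

lemma varrho_ba : varrho bb aa = 1 := by
  have heq : (fun n : ℕ => ‖(fun x : A2 => bb * x - x * aa)^[n] 1‖ ^ ((n : ℝ)⁻¹))
      = fun _ : ℕ => (1:ℝ) := by
    funext n
    rcases Nat.eq_zero_or_pos n with h0 | h1
    · subst h0
      simp
    · rw [iterba n h1, normba n, Real.one_rpow]
  unfold varrho
  rw [heq, Filter.limsup_const]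

end RhoAux

theorem stmt_12 :
    ∃ (A : Type) (instR : NormedRing A)
      (_ : @NormedAlgebra ℂ A _ instR.toSeminormedRing)
      (_ : @CompleteSpace A instR.toMetricSpace.toUniformSpace),
      @RhoAsymWitness A instR := by
  classical
  letI instR : NormedRing A2 := Matrix.linftyOpNormedRing
  letI instA : NormedAlgebra ℂ A2 := Matrix.linftyOpNormedAlgebra
  letI instS : NormedSpace ℂ A2 := Matrix.linftyOpNormedSpace
  letI instC : CompleteSpace A2 := FiniteDimensional.complete ℂ A2
  refine ⟨A2, instR, instA, instC, ?_⟩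
  refine ⟨!![1,0;0,0], !![0,0;1,1], aa, bb, ?_, ?_, ?_, ?_, ?_, ?_, varrho_ab, varrho_ba, ?_⟩
  · ext i j; fin_cases i <;> fin_cases j <;> simp
  · ext i j; fin_cases i <;> fin_cases j <;> simp
  · ext i j; fin_cases i <;> fin_cases j <;> simp
  · intro h
    have := congrFun (congrFun h 1) 0
    simp at this
  · ext i j; fin_cases i <;> fin_cases j <;> simp [aa] <;> norm_num
  · ext i j; fin_cases i <;> fin_cases j <;> simp [bb] <;> norm_num
  · rw [varrho_ab, varrho_ba]; norm_num
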